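/- arXiv:0806.4802 — 2 statements merged into one kernel-verified Lean document; each statement's English description precedes it below -/
import Mathlib

section
/- For every number of actions N ≥ 1, every discount factor α with 0 < α < 1/(800·ln(2.32·N)), every sequence of gains g_i^j ∈ [−1,1] chosen by Nature, every action i, and every round j ≥ 0, the NormalHedge regret satisfies R_i^j ≤ √(8·ln(2.32·N)/α). -/
open Finset

/-- The NormalHedge potential function: `Φ(x) = exp(x²/8)` for `x > 0`, `1` for `x ≤ 0`. -/
noncomputable def Phi (x : ℝ) : ℝ := if 0 < x then Real.exp (x ^ 2 / 8) else 1

/-- NormalHedge weight for regret `R`: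
`w = R·exp(α·R²/8)` if `R > 0`, and `0` if `R ≤ 0`. -/
noncomputable def nhWeight (α R : ℝ) : ℝ :=
  if 0 < R then R * Real.exp (α * R ^ 2 / 8) else 0

/-- NormalHedge probability on action `i` given current regrets `R`:
normalized weights if the weight sum is positive, uniform otherwise. -/
noncomputable def nhProb {N : ℕ} (α : ℝ) (R : Fin N → ℝ) (i : Fin N) : ℝ :=
  if 0 < ∑ k, nhWeight α (R k) then nhWeight α (R i) / ∑ k, nhWeight α (R k)
  else 1 / N

/-- NormalHedge regrets: `R_i^0 = 0`, `R_i^{j+1} = (1-α)·R_i^j + g_i^j - g_A^j` where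
`g_A^j = Σ_i p_i^j · g_i^j`. Here `g j i` is the gain of action `i` in round `j`. -/
noncomputable def nhRegret {N : ℕ} (α : ℝ) (g : ℕ → Fin N → ℝ) : ℕ → Fin N → ℝ
  | 0 => fun _ => 0
  | j + 1 => fun i =>
      (1 - α) * nhRegret α g j i + g j i -
        ∑ k, nhProb α (nhRegret α g j) k * g j k


/-- smoothed potential -/
noncomputable def nhF (α t : ℝ) : ℝ := Real.exp (α * max t 0 ^ 2 / 8)

lemma exp_le_inv_one_sub {x : ℝ} (h1 : x < 1) : Real.exp x ≤ (1 - x)⁻¹ := by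
  have h := Real.add_one_le_exp (-x)
  rw [Real.exp_neg] at h
  have hp : 0 < Real.exp x := Real.exp_pos x
  have h2 : (1 - x) * Real.exp x ≤ 1 := by
    have := (inv_mul_cancel₀ (ne_of_gt hp))
    nlinarith [hp]
  rw [inv_eq_one_div, le_div_iff₀ (by linarith : (0:ℝ) < 1 - x)]
  linarith [h2]

lemma nhF_one_le (α t : ℝ) (hα : 0 ≤ α) : 1 ≤ nhF α t := by
  rw [nhF, show (1:ℝ) = Real.exp 0 from (Real.exp_zero).symm]
  apply Real.exp_le_exp.2
  positivity

lemma nhF_nonpos (α t : ℝ) (ht : t ≤ 0) : nhF α t = 1 := by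
  rw [nhF, max_eq_right ht]
  norm_num

lemma nhF_pos' (α t : ℝ) (ht : 0 < t) : nhF α t = Real.exp (α * t ^ 2 / 8) := by
  rw [nhF, max_eq_left ht.le]

lemma nhWeight_nonneg (α R : ℝ) (hα : 0 ≤ α) : 0 ≤ nhWeight α R := by
  rw [nhWeight]
  split
  · positivity
  · exact le_refl _

lemma hasDerivAt_exp_quad (α t : ℝ) :
    HasDerivAt (fun s : ℝ => Real.exp (α * s ^ 2 / 8))
      (Real.exp (α * t ^ 2 / 8) * (α * (2 * t) / 8)) t := by
  have h1 : HasDerivAt (fun s : ℝ => α * s ^ 2 / 8) (α * (2 * t) / 8) t := by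
    simpa using ((hasDerivAt_pow 2 t).const_mul α).div_const 8
  exact h1.exp

lemma hasDerivAt_nhF (α : ℝ) (hα : 0 ≤ α) (t : ℝ) :
    HasDerivAt (nhF α) (α / 4 * nhWeight α t) t := by
  rcases lt_trichotomy t 0 with ht | ht | ht
  · have hev : nhF α =ᶠ[nhds t] fun _ => (1:ℝ) := by
      filter_upwards [Iio_mem_nhds ht] with s hs
      exact nhF_nonpos α s (le_of_lt hs)
    rw [nhWeight, if_neg (by linarith), mul_zero]
    exact (hasDerivAt_const t (1:ℝ)).congr_of_eventuallyEq hev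
  · subst ht
    rw [nhWeight, if_neg (lt_irrefl 0), mul_zero]
    rw [hasDerivAt_iff_isLittleO]
    have hψ0 := hasDerivAt_exp_quad α 0
    rw [hasDerivAt_iff_isLittleO] at hψ0
    have h1 : (fun x' : ℝ => Real.exp (α * x' ^ 2 / 8) - 1) =o[nhds (0:ℝ)] fun x' => x' := by
      simpa using hψ0
    have h2 : (fun x' : ℝ => nhF α x' - 1) =O[nhds (0:ℝ)]
        fun x' => Real.exp (α * x' ^ 2 / 8) - 1 := by
      apply Asymptotics.IsBigO.of_bound 1
      filter_upwards with x'
      have hle : nhF α x' ≤ Real.exp (α * x' ^ 2 / 8) := by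
        rw [nhF]
        apply Real.exp_le_exp.2
        have : max x' 0 ^ 2 ≤ x' ^ 2 := by
          rcases le_or_gt x' 0 with h | h
          · rw [max_eq_right h]
            nlinarith [sq_nonneg x']
          · rw [max_eq_left h.le]
        nlinarith [this]
      have h1' : 1 ≤ nhF α x' := nhF_one_le α x' hα
      have h3 : (1:ℝ) ≤ Real.exp (α * x' ^ 2 / 8) := le_trans h1' hle
      rw [Real.norm_eq_abs, Real.norm_eq_abs, abs_of_nonneg (by linarith),
        abs_of_nonneg (by linarith)]
      linarith
    have := h2.trans_isLittleO h1
    simpa [nhF_nonpos α 0 (le_refl 0)] using this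
  · have hev : nhF α =ᶠ[nhds t] fun s => Real.exp (α * s ^ 2 / 8) := by
      filter_upwards [Ioi_mem_nhds ht] with s hs
      exact nhF_pos' α s hs
    have := (hasDerivAt_exp_quad α t).congr_of_eventuallyEq hev
    refine this.congr_deriv ?_
    simp only [nhWeight, if_pos ht]
    ring

lemma quad_mono {α t m : ℝ} (hα : 0 ≤ α) (ht : 0 ≤ t) (htm : t ≤ m) :
    α * t ^ 2 / 8 ≤ α * m ^ 2 / 8 := by
  have h := mul_le_mul htm htm ht (le_trans ht htm)
  have := mul_le_mul_of_nonneg_left h hα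
  nlinarith [this]

lemma hasDerivAt_psi (α u : ℝ) :
    HasDerivAt (fun s : ℝ => s * Real.exp (α * s ^ 2 / 8))
      ((1 + α * u ^ 2 / 4) * Real.exp (α * u ^ 2 / 8)) u := by
  have := (hasDerivAt_id u).mul (hasDerivAt_exp_quad α u)
  simp only [id_eq, one_mul] at this
  refine this.congr_deriv ?_
  ring

lemma nhWeight_lip (α m s t : ℝ) (hα : 0 ≤ α) (hm : 0 ≤ m) (hst : s ≤ t) (htm : t ≤ m) :
    nhWeight α t - nhWeight α s ≤ (1 + α * m ^ 2 / 4) * Real.exp (α * m ^ 2 / 8) * (t - s) := by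
  have hαm : 0 ≤ α * m ^ 2 / 4 := by positivity
  have hEm : 0 < Real.exp (α * m ^ 2 / 8) := Real.exp_pos _
  have hKpos : 0 < (1 + α * m ^ 2 / 4) * Real.exp (α * m ^ 2 / 8) := by positivity
  rcases le_or_gt t 0 with ht | ht
  · rw [nhWeight, if_neg (not_lt.2 ht), nhWeight, if_neg (not_lt.2 (le_trans hst ht))]
    have : 0 ≤ t - s := by linarith
    nlinarith
  · rcases le_or_gt s 0 with hs | hs
    · rw [nhWeight, if_pos ht, nhWeight, if_neg (not_lt.2 hs)]
      have he : Real.exp (α * t ^ 2 / 8) ≤ Real.exp (α * m ^ 2 / 8) :=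
        Real.exp_le_exp.2 (quad_mono hα ht.le htm)
      have h1 : t * Real.exp (α * t ^ 2 / 8) ≤ t * Real.exp (α * m ^ 2 / 8) :=
        mul_le_mul_of_nonneg_left he ht.le
      have e1 : t * Real.exp (α * m ^ 2 / 8) ≤ (t - s) * Real.exp (α * m ^ 2 / 8) :=
        mul_le_mul_of_nonneg_right (by linarith) hEm.le
      have e2 : (t - s) * Real.exp (α * m ^ 2 / 8)
          ≤ (1 + α * m ^ 2 / 4) * Real.exp (α * m ^ 2 / 8) * (t - s) := by
        nlinarith [mul_nonneg (mul_nonneg hαm hEm.le) (show (0:ℝ) ≤ t - s by linarith)]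
      linarith
    · rcases eq_or_lt_of_le hst with rfl | hst'
      · simp
      · obtain ⟨ξ, hξmem, hξ⟩ := exists_hasDerivAt_eq_slope
          (fun s : ℝ => s * Real.exp (α * s ^ 2 / 8))
          (fun u => (1 + α * u ^ 2 / 4) * Real.exp (α * u ^ 2 / 8)) hst'
          (by fun_prop) (fun x _ => hasDerivAt_psi α x)
        rw [nhWeight, if_pos ht, nhWeight, if_pos hs]
        have hts : 0 < t - s := by linarith
        have heq : t * Real.exp (α * t ^ 2 / 8) - s * Real.exp (α * s ^ 2 / 8)
            = (1 + α * ξ ^ 2 / 4) * Real.exp (α * ξ ^ 2 / 8) * (t - s) := by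
          field_simp at hξ
          linarith [hξ]
        rw [heq]
        have hξ0 : 0 < ξ := lt_trans hs hξmem.1
        have hξm : ξ ≤ m := le_trans hξmem.2.le htm
        have he : Real.exp (α * ξ ^ 2 / 8) ≤ Real.exp (α * m ^ 2 / 8) :=
          Real.exp_le_exp.2 (quad_mono hα hξ0.le hξm)
        have hαξ : 0 ≤ α * ξ ^ 2 / 4 := by positivity
        have h14 : 1 + α * ξ ^ 2 / 4 ≤ 1 + α * m ^ 2 / 4 := by
          have := quad_mono hα hξ0.le hξm
          linarith
        apply mul_le_mul_of_nonneg_right _ hts.le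
        calc (1 + α * ξ ^ 2 / 4) * Real.exp (α * ξ ^ 2 / 8)
            ≤ (1 + α * ξ ^ 2 / 4) * Real.exp (α * m ^ 2 / 8) :=
              mul_le_mul_of_nonneg_left he (by linarith)
          _ ≤ (1 + α * m ^ 2 / 4) * Real.exp (α * m ^ 2 / 8) :=
              mul_le_mul_of_nonneg_right h14 hEm.le

lemma nhF_taylor (α m x y : ℝ) (hα : 0 ≤ α) (hm : 0 ≤ m) (hx : x ≤ m) (hy : y ≤ m) :
    nhF α y ≤ nhF α x + α / 4 * nhWeight α x * (y - x)
      + α / 4 * ((1 + α * m ^ 2 / 4) * Real.exp (α * m ^ 2 / 8)) / 2 * (y - x) ^ 2 := by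
  set K := (1 + α * m ^ 2 / 4) * Real.exp (α * m ^ 2 / 8) with hK
  set G : ℝ → ℝ := fun t => nhF α x + α / 4 * nhWeight α x * (t - x)
      + α / 4 * K / 2 * (t - x) ^ 2 - nhF α t with hGdef
  have hG : ∀ t, HasDerivAt G
      (α / 4 * nhWeight α x + α / 4 * K * (t - x) - α / 4 * nhWeight α t) t := by
    intro t
    have h1 : HasDerivAt (fun t : ℝ => α / 4 * nhWeight α x * (t - x))
        (α / 4 * nhWeight α x) t := by
      simpa using ((hasDerivAt_id t).sub_const x).const_mul (α / 4 * nhWeight α x)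
    have h2 : HasDerivAt (fun t : ℝ => α / 4 * K / 2 * (t - x) ^ 2)
        (α / 4 * K * (t - x)) t := by
      have := (((hasDerivAt_id t).sub_const x).pow 2).const_mul (α / 4 * K / 2)
      refine this.congr_deriv ?_
      simp
      ring
    have h3 := (((h1.const_add (nhF α x)).add h2).sub (hasDerivAt_nhF α hα t))
    refine h3.congr_deriv ?_
    try ring
  have hGx : G x = 0 := by simp [hGdef]
  have hcont : Continuous G := by
    have : Differentiable ℝ G := fun t => (hG t).differentiableAt
    exact this.continuous
  rcases le_or_gt x y with hxy | hxy
  · have hmono : MonotoneOn G (Set.Icc x y) := by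
      apply monotoneOn_of_deriv_nonneg (convex_Icc x y) hcont.continuousOn
      · intro t _
        exact ((hG t).differentiableAt).differentiableWithinAt
      · intro t htmem
        rw [interior_Icc] at htmem
        rw [(hG t).deriv]
        have hlip := nhWeight_lip α m x t hα hm htmem.1.le (le_trans htmem.2.le hy)
        have := mul_le_mul_of_nonneg_left hlip (by linarith : (0:ℝ) ≤ α / 4)
        simp only [hK]
        nlinarith [this]
    have := hmono (Set.left_mem_Icc.2 hxy) (Set.right_mem_Icc.2 hxy) hxy
    rw [hGx] at this
    simp only [hGdef] at this
    linarith
  · have hmono : AntitoneOn G (Set.Icc y x) := by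
      apply antitoneOn_of_deriv_nonpos (convex_Icc y x) hcont.continuousOn
      · intro t _
        exact ((hG t).differentiableAt).differentiableWithinAt
      · intro t htmem
        rw [interior_Icc] at htmem
        rw [(hG t).deriv]
        have hlip := nhWeight_lip α m t x hα hm htmem.2.le hx
        have := mul_le_mul_of_nonneg_left hlip (by linarith : (0:ℝ) ≤ α / 4)
        simp only [hK]
        nlinarith [this]
    have := hmono (Set.left_mem_Icc.2 hxy.le) (Set.right_mem_Icc.2 hxy.le) hxy.le
    rw [hGx] at this
    simp only [hGdef] at this
    linarith

set_option maxHeartbeats 1000000 in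
lemma nhF_step (α L R r : ℝ) (hα : 0 < α) (hα4 : 4 * α ≤ 1 / 100)
    (hRL : α * max R 0 ^ 2 ≤ 8 * L) (hLα : 8 * L * α ≤ 1 / 100) (hr : |r| ≤ 2) :
    nhF α ((1 - α) * R + r) ≤ nhF α R + α / 4 * nhWeight α R * r
      + α * nhF α R * (65 / 100 - 83 / 100 * Real.log (nhF α R)) := by
  obtain ⟨hr1, hr2⟩ := abs_le.1 hr
  rcases le_or_gt R 0 with hR | hR
  · -- nonpositive regret case
    rw [nhF_nonpos α R hR, nhWeight, if_neg (not_lt.2 hR), Real.log_one]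
    have hy : (1 - α) * R + r ≤ 2 := by nlinarith
    have hmax : max ((1 - α) * R + r) 0 ≤ 2 := max_le hy (by norm_num)
    have hmax0 : 0 ≤ max ((1 - α) * R + r) 0 := le_max_right _ _
    have h1 : nhF α ((1 - α) * R + r) ≤ Real.exp (α / 2) := by
      rw [nhF]
      apply Real.exp_le_exp.2
      have hm4 : (max ((1 - α) * R + r) 0) ^ 2 ≤ 4 := by nlinarith
      nlinarith [mul_le_mul_of_nonneg_left hm4 hα.le]
    have h2 : Real.exp (α / 2) ≤ (1 - α / 2)⁻¹ := exp_le_inv_one_sub (by linarith)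
    have h3 : (1 - α / 2)⁻¹ ≤ 1 + 65 / 100 * α := by
      rw [inv_eq_one_div, div_le_iff₀ (by linarith)]
      nlinarith
    calc nhF α ((1 - α) * R + r) ≤ (1 - α / 2)⁻¹ := le_trans h1 h2
      _ ≤ 1 + 65 / 100 * α := h3
      _ ≤ 1 + α / 4 * 0 * r + α * 1 * (65 / 100 - 83 / 100 * 0) := by ring_nf; linarith
  · -- positive regret case
    have hmaxR : max R 0 = R := max_eq_left hR.le
    rw [hmaxR] at hRL
    set F := Real.exp (α * R ^ 2 / 8) with hFdef
    have hF0 : 0 < F := Real.exp_pos _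
    have hF : nhF α R = F := nhF_pos' α R hR
    have hlog : Real.log (nhF α R) = α * R ^ 2 / 8 := by rw [hF, hFdef, Real.log_exp]
    have hw : nhWeight α R = R * F := by rw [nhWeight, if_pos hR]
    have haR0 : 0 ≤ α * R := by positivity
    have haRsq : (α * R) ^ 2 ≤ 1 / 100 := by
      have := mul_le_mul_of_nonneg_left hRL hα.le
      nlinarith
    have haR : α * R ≤ 1 / 10 := by nlinarith [sq_nonneg (α * R - 1 / 10)]
    set y := (1 - α) * R + r with hydef
    have hym : y ≤ R + 2 := by nlinarith
    have taylor := nhF_taylor α (R + 2) R y hα.le (by linarith) (by linarith) hym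
    have hsq : (y - R) ^ 2 ≤ 441 / 100 := by
      have hyR : y - R = r - α * R := by rw [hydef]; ring
      rw [hyR]
      nlinarith [mul_le_mul_of_nonneg_right (show -r ≤ 2 by linarith) haR0]
    have h_exp : Real.exp (α * (R + 2) ^ 2 / 8) ≤ 800 / 759 * F := by
      have harg : α * (R + 2) ^ 2 / 8 ≤ α * R ^ 2 / 8 + 41 / 800 := by nlinarith
      calc Real.exp (α * (R + 2) ^ 2 / 8) ≤ Real.exp (α * R ^ 2 / 8 + 41 / 800) :=
            Real.exp_le_exp.2 harg
        _ = F * Real.exp (41 / 800) := by rw [Real.exp_add]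
        _ ≤ F * (1 - 41 / 800)⁻¹ :=
            mul_le_mul_of_nonneg_left (exp_le_inv_one_sub (by norm_num)) hF0.le
        _ = 800 / 759 * F := by
            rw [show ((1:ℝ) - 41 / 800)⁻¹ = 800 / 759 by norm_num]
            ring
    have h_lin : 1 + α * (R + 2) ^ 2 / 4 ≤ 1 + α * R ^ 2 / 4 + 41 / 400 := by nlinarith
    have hA0 : (0:ℝ) ≤ 1 + α * R ^ 2 / 4 + 41 / 400 := by positivity
    have hE1 : (1 + α * (R + 2) ^ 2 / 4) * Real.exp (α * (R + 2) ^ 2 / 8)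
        ≤ (1 + α * R ^ 2 / 4 + 41 / 400) * (800 / 759 * F) :=
      mul_le_mul h_lin h_exp (Real.exp_pos _).le hA0
    have hE2 : α / 4 * ((1 + α * (R + 2) ^ 2 / 4) * Real.exp (α * (R + 2) ^ 2 / 8)) / 2
          * (y - R) ^ 2
        ≤ α / 8 * ((1 + α * R ^ 2 / 4 + 41 / 400) * (800 / 759 * F)) * (441 / 100) := by
      have hc : α / 4 * ((1 + α * (R + 2) ^ 2 / 4) * Real.exp (α * (R + 2) ^ 2 / 8)) / 2
          ≤ α / 8 * ((1 + α * R ^ 2 / 4 + 41 / 400) * (800 / 759 * F)) := by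
        have := mul_le_mul_of_nonneg_left hE1 (show (0:ℝ) ≤ α / 8 by linarith)
        linarith
      have hc0 : 0 ≤ α / 4 * ((1 + α * (R + 2) ^ 2 / 4) * Real.exp (α * (R + 2) ^ 2 / 8)) / 2 := by
        positivity
      exact mul_le_mul hc hsq (sq_nonneg _) (le_trans hc0 hc)
    have hlogF : Real.log F = α * R ^ 2 / 8 := by rw [hFdef]; exact Real.log_exp _
    rw [hF, hw, hlogF]
    have hyRr : y - R = r - α * R := by rw [hydef]; ring
    rw [hyRr] at hE2
    rw [hF, hw, hyRr] at taylor
    have hfinal : α / 8 * ((1 + α * R ^ 2 / 4 + 41 / 400) * (800 / 759 * F)) * (441 / 100)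
        ≤ α / 4 * (R * F) * r - α / 4 * (R * F) * (r - α * R)
          + α * F * (65 / 100 - 83 / 100 * (α * R ^ 2 / 8)) := by
      have hu : 0 ≤ α * F := by positivity
      have hv : 0 ≤ α ^ 2 * R ^ 2 * F := by positivity
      nlinarith [hu, hv]
    linarith [taylor, hE2, hfinal]


lemma tangent_ineq (α f c : ℝ) (hα : 0 ≤ α) (hf : 0 < f) (hc : 0 < c) :
    f + α * f * (65 / 100 - 83 / 100 * Real.log f)
      ≤ c + α * c * (65 / 100 - 83 / 100 * Real.log c)
        + (1 + α * 65 / 100 - α * 83 / 100 * (Real.log c + 1)) * (f - c) := by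
  have key : f - c ≤ f * (Real.log f - Real.log c) := by
    have h := Real.log_le_sub_one_of_pos (show 0 < c / f by positivity)
    rw [Real.log_div (ne_of_gt hc) (ne_of_gt hf)] at h
    have h2 := mul_le_mul_of_nonneg_left h hf.le
    have hcf : f * (c / f) = c := by field_simp
    nlinarith [h2]
  nlinarith [mul_le_mul_of_nonneg_left key (mul_nonneg hα (by norm_num : (0:ℝ) ≤ 83 / 100))]

lemma log_232 : (65:ℝ) / 83 ≤ Real.log 2.32 := by
  rw [Real.le_log_iff_exp_le (by norm_num : (0:ℝ) < 2.32)]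
  have h1 : Real.exp ((65:ℝ) / 83) = Real.exp ((65:ℝ) / 664) ^ (8:ℕ) := by
    rw [← Real.exp_nat_mul]
    norm_num
  have h2 : Real.exp ((65:ℝ) / 664) ≤ 664 / 599 := by
    have := exp_le_inv_one_sub (show (65:ℝ) / 664 < 1 by norm_num)
    rw [show ((1:ℝ) - 65 / 664)⁻¹ = 664 / 599 by norm_num] at this
    exact this
  rw [h1]
  calc Real.exp ((65:ℝ) / 664) ^ (8:ℕ) ≤ (664 / 599 : ℝ) ^ (8:ℕ) :=
        pow_le_pow_left₀ (Real.exp_pos _).le h2 8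
    _ ≤ 2.32 := by norm_num

lemma sum_resid_zero {N : ℕ} (α : ℝ) (R : Fin N → ℝ) (g : Fin N → ℝ) (hα : 0 ≤ α) :
    ∑ i, nhWeight α (R i) * (g i - ∑ k, nhProb α R k * g k) = 0 := by
  have hwnn : ∀ i, 0 ≤ nhWeight α (R i) := by
    intro i; rw [nhWeight]; split
    · positivity
    · exact le_refl _
  rcases lt_or_ge 0 (∑ k, nhWeight α (R k)) with hW | hW
  · have hWne : (∑ k, nhWeight α (R k)) ≠ 0 := ne_of_gt hW
    simp only [nhProb, if_pos hW]
    rw [Finset.sum_congr rfl (fun i _ => mul_sub (nhWeight α (R i)) _ _),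
      Finset.sum_sub_distrib]
    have hA : ∑ k, nhWeight α (R k) / (∑ k, nhWeight α (R k)) * g k
        = (∑ k, nhWeight α (R k) * g k) / (∑ k, nhWeight α (R k)) := by
      rw [Finset.sum_congr rfl (fun k _ => div_mul_eq_mul_div (nhWeight α (R k)) _ (g k)),
        ← Finset.sum_div]
    rw [hA, ← Finset.sum_mul, mul_comm, div_mul_cancel₀ _ hWne, sub_self]
  · have hzero : ∀ i ∈ Finset.univ, nhWeight α (R i) = 0 := by
      have hW0 : (∑ k, nhWeight α (R k)) = 0 :=
        le_antisymm hW (Finset.sum_nonneg (fun i _ => hwnn i))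
      exact (Finset.sum_eq_zero_iff_of_nonneg (fun i _ => hwnn i)).1 hW0
    apply Finset.sum_eq_zero
    intro i hi
    rw [hzero i hi, zero_mul]

lemma sum_nhProb {N : ℕ} (hN : 0 < N) (α : ℝ) (R : Fin N → ℝ) :
    ∑ i, nhProb α R i = 1 := by
  rcases lt_or_ge 0 (∑ k, nhWeight α (R k)) with hW | hW
  · simp only [nhProb, if_pos hW]
    rw [← Finset.sum_div, div_self (ne_of_gt hW)]
  · simp only [nhProb, if_neg (not_lt.2 hW)]
    rw [Finset.sum_const, Finset.card_univ, Fintype.card_fin, nsmul_eq_mul]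
    have hN0 : (N:ℝ) ≠ 0 := by positivity
    field_simp

lemma nhProb_nonneg' {N : ℕ} (α : ℝ) (R : Fin N → ℝ) (i : Fin N) (hα : 0 ≤ α) :
    0 ≤ nhProb α R i := by
  have hwnn : ∀ i, 0 ≤ nhWeight α (R i) := by
    intro i; rw [nhWeight]; split
    · positivity
    · exact le_refl _
  rcases lt_or_ge 0 (∑ k, nhWeight α (R k)) with hW | hW
  · rw [nhProb, if_pos hW]
    exact div_nonneg (hwnn i) hW.le
  · rw [nhProb, if_neg (not_lt.2 hW)]
    exact div_nonneg zero_le_one (Nat.cast_nonneg N)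

set_option maxHeartbeats 2000000 in
/-- for all `N ≥ 1`, all `0 < α < 1/(800 ln(2.32 N))`, all gain sequences
in `[-1,1]`, all actions `i`, and all rounds `j`, the NormalHedge regret satisfies
`R_i^j ≤ √(8 ln(2.32 N) / α)`. -/
theorem normalHedge_regret_bound
    (N : ℕ) (hN : 1 ≤ N)
    (α : ℝ) (hα0 : 0 < α) (hα : α < 1 / (800 * Real.log (2.32 * N)))
    (g : ℕ → Fin N → ℝ) (hg : ∀ j i, g j i ∈ Set.Icc (-1 : ℝ) 1)
    (i : Fin N) (j : ℕ) :
    nhRegret α g j i ≤ Real.sqrt (8 * Real.log (2.32 * N) / α) := by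
  have hNpos : (0:ℝ) < (N:ℝ) := by exact_mod_cast hN
  have hN1 : (1:ℝ) ≤ (N:ℝ) := by exact_mod_cast hN
  have hcN : (0:ℝ) < 2.32 * N := by positivity
  set L := Real.log (2.32 * N) with hLdef
  have hLlb : (65:ℝ) / 83 ≤ L := by
    rw [hLdef]
    calc (65:ℝ) / 83 ≤ Real.log 2.32 := log_232
      _ ≤ Real.log (2.32 * N) := Real.log_le_log (by norm_num) (by nlinarith)
  have hL0 : 0 < L := lt_of_lt_of_le (by norm_num) hLlb
  have hαL : α * (800 * L) < 1 := by
    rw [lt_div_iff₀ (by positivity : (0:ℝ) < 800 * L)] at hα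
    exact hα
  have hα4 : 4 * α ≤ 1 / 100 := by nlinarith
  have hLα : 8 * L * α ≤ 1 / 100 := by nlinarith
  -- the potential invariant
  have inv : ∀ j, ∑ i, nhF α (nhRegret α g j i) ≤ 2.32 * N := by
    intro j
    induction j with
    | zero =>
        have h0 : ∀ i : Fin N, nhF α (nhRegret α g 0 i) = 1 := by
          intro i
          show nhF α 0 = 1
          exact nhF_nonpos α 0 (le_refl 0)
        rw [Finset.sum_congr rfl (fun i _ => h0 i), Finset.sum_const, Finset.card_univ,
          Fintype.card_fin, nsmul_eq_mul, mul_one]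
        nlinarith
    | succ j ih =>
        set R : Fin N → ℝ := nhRegret α g j with hRdef
        set A : ℝ := ∑ k, nhProb α R k * g j k with hAdef
        have hgabs : ∀ k, |g j k| ≤ 1 := by
          intro k
          obtain ⟨h1, h2⟩ := hg j k
          exact abs_le.2 ⟨h1, h2⟩
        have hAabs : |A| ≤ 1 := by
          rw [hAdef]
          calc |∑ k, nhProb α R k * g j k| ≤ ∑ k, |nhProb α R k * g j k| :=
                Finset.abs_sum_le_sum_abs _ _
            _ ≤ ∑ k, nhProb α R k := by
                apply Finset.sum_le_sum
                intro k _
                rw [abs_mul, abs_of_nonneg (nhProb_nonneg' α R k hα0.le)]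
                calc nhProb α R k * |g j k| ≤ nhProb α R k * 1 :=
                      mul_le_mul_of_nonneg_left (hgabs k) (nhProb_nonneg' α R k hα0.le)
                  _ = nhProb α R k := mul_one _
            _ = 1 := sum_nhProb hN α R
        have hRle : ∀ i : Fin N, α * max (R i) 0 ^ 2 ≤ 8 * L := by
          intro i
          have hFle : nhF α (R i) ≤ 2.32 * N := by
            refine le_trans ?_ ih
            exact Finset.single_le_sum (f := fun i => nhF α (R i))
              (fun i _ => (Real.exp_pos _).le) (Finset.mem_univ i)
          have : Real.exp (α * max (R i) 0 ^ 2 / 8) ≤ Real.exp L := by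
            rw [hLdef, Real.exp_log hcN]
            exact hFle
          have := Real.exp_le_exp.1 this
          linarith
        have hstep : ∀ i : Fin N, nhF α (nhRegret α g (j + 1) i)
            ≤ nhF α (R i) + α / 4 * nhWeight α (R i) * (g j i - A)
              + α * nhF α (R i) * (65 / 100 - 83 / 100 * Real.log (nhF α (R i))) := by
          intro i
          have hRi : nhRegret α g (j + 1) i = (1 - α) * R i + (g j i - A) := by
            show (1 - α) * nhRegret α g j i + g j i
                - ∑ k, nhProb α (nhRegret α g j) k * g j k = _
            rw [← hRdef, ← hAdef]
            ring
          rw [hRi]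
          apply nhF_step α L (R i) (g j i - A) hα0 hα4 (hRle i) hLα
          calc |g j i - A| ≤ |g j i| + |A| := abs_sub _ _
            _ ≤ 2 := by linarith [hgabs i]
        have hzero : ∑ i, nhWeight α (R i) * (g j i - A) = 0 := by
          have := sum_resid_zero α R (g j) hα0.le
          rw [← hAdef] at this
          exact this
        have hc0 : (0:ℝ) < 2.32 := by norm_num
        set K2 : ℝ := 1 + α * 65 / 100 - α * 83 / 100 * (Real.log 2.32 + 1) with hK2def
        have hK2 : 0 ≤ K2 := by
          have hlogc : Real.log 2.32 ≤ 1.32 := by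
            have := Real.log_le_sub_one_of_pos hc0
            norm_num at this ⊢
            linarith
          rw [hK2def]
          nlinarith [Real.log_nonneg (by norm_num : (1:ℝ) ≤ 2.32)]
        have htang : ∀ i : Fin N,
            nhF α (R i) + α * nhF α (R i) * (65 / 100 - 83 / 100 * Real.log (nhF α (R i)))
            ≤ (2.32 + α * 2.32 * (65 / 100 - 83 / 100 * Real.log 2.32))
              + K2 * (nhF α (R i) - 2.32) := by
          intro i
          exact tangent_ineq α (nhF α (R i)) 2.32 hα0.le (Real.exp_pos _) hc0
        calc ∑ i, nhF α (nhRegret α g (j + 1) i)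
            ≤ ∑ i, (nhF α (R i) + α / 4 * nhWeight α (R i) * (g j i - A)
              + α * nhF α (R i) * (65 / 100 - 83 / 100 * Real.log (nhF α (R i)))) :=
              Finset.sum_le_sum (fun i _ => hstep i)
          _ = ∑ i, (nhF α (R i)
              + α * nhF α (R i) * (65 / 100 - 83 / 100 * Real.log (nhF α (R i))))
              + α / 4 * ∑ i, nhWeight α (R i) * (g j i - A) := by
              rw [Finset.mul_sum, ← Finset.sum_add_distrib]
              exact Finset.sum_congr rfl (fun i _ => by ring)
          _ = ∑ i, (nhF α (R i)
              + α * nhF α (R i) * (65 / 100 - 83 / 100 * Real.log (nhF α (R i)))) := by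
              rw [hzero]
              ring
          _ ≤ ∑ i, ((2.32 + α * 2.32 * (65 / 100 - 83 / 100 * Real.log 2.32))
              + K2 * (nhF α (R i) - 2.32)) :=
              Finset.sum_le_sum (fun i _ => htang i)
          _ = N * (2.32 + α * 2.32 * (65 / 100 - 83 / 100 * Real.log 2.32))
              + K2 * ((∑ i, nhF α (R i)) - N * 2.32) := by
              rw [Finset.sum_add_distrib, Finset.sum_const, Finset.card_univ,
                Fintype.card_fin, nsmul_eq_mul, ← Finset.mul_sum, Finset.sum_sub_distrib,
                Finset.sum_const, Finset.card_univ, Fintype.card_fin, nsmul_eq_mul]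
              try ring
          _ ≤ 2.32 * N := by
              have h1 : α * 2.32 * (65 / 100 - 83 / 100 * Real.log 2.32) ≤ 0 := by
                have := log_232
                nlinarith
              have h2 : K2 * ((∑ i, nhF α (R i)) - N * 2.32) ≤ 0 := by
                apply mul_nonpos_of_nonneg_of_nonpos hK2
                nlinarith [ih]
              nlinarith
  -- extract the bound
  have hFle : nhF α (nhRegret α g j i) ≤ 2.32 * N := by
    refine le_trans ?_ (inv j)
    exact Finset.single_le_sum (f := fun i => nhF α (nhRegret α g j i))
      (fun i _ => (Real.exp_pos _).le) (Finset.mem_univ i)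
  have harg : α * max (nhRegret α g j i) 0 ^ 2 / 8 ≤ L := by
    have : Real.exp (α * max (nhRegret α g j i) 0 ^ 2 / 8) ≤ Real.exp L := by
      rw [hLdef, Real.exp_log hcN]
      exact hFle
    exact Real.exp_le_exp.1 this
  have hsq : max (nhRegret α g j i) 0 ^ 2 ≤ 8 * L / α := by
    rw [le_div_iff₀ hα0]
    nlinarith
  calc nhRegret α g j i ≤ max (nhRegret α g j i) 0 := le_max_left _ _
    _ = Real.sqrt (max (nhRegret α g j i) 0 ^ 2) :=
        (Real.sqrt_sq (le_max_right _ _)).symm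
    _ ≤ Real.sqrt (8 * L / α) := Real.sqrt_le_sqrt hsq
end

section
/- In the scaled one-step NormalHedge setting, suppose the set I₂ = {i : R_i > 0} is nonempty and the average potential satisfies Ψ = (1/N)·Σ_{i=1}^N Φ(R_i) < 2.32. Then the average potential over I₂ increases by less than (2/3)·α after one update: (1/|I₂|)·Σ_{i∈I₂} (Φ(R'_i) − Φ(R_i)) < (2/3)·α. -/
open Finset Filter

/-- Derivative of the potential: `Φ'(x) = (x/4)·exp(x²/8)` for `x > 0`, `0` for `x ≤ 0`. -/
noncomputable def Phi' (x : ℝ) : ℝ := if 0 < x then (x / 4) * Real.exp (x ^ 2 / 8) else 0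

lemma phi_ge_one (x : ℝ) : 1 ≤ Phi x := by
  unfold Phi; split
  · exact Real.one_le_exp (by positivity)
  · exact le_refl 1

lemma phi'_nonneg (x : ℝ) : 0 ≤ Phi' x := by
  unfold Phi'; split
  · positivity
  · exact le_refl 0

lemma sqrt_helper {a b : ℝ} (ha : 0 ≤ a) (hb : 0 ≤ b) (h : a ^ 2 ≤ b ^ 2) : a ≤ b := by
  calc a = Real.sqrt (a ^ 2) := (Real.sqrt_sq ha).symm
  _ ≤ Real.sqrt (b ^ 2) := Real.sqrt_le_sqrt h
  _ = b := Real.sqrt_sq hb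

lemma hasDerivAt_phi (x : ℝ) : HasDerivAt Phi (Phi' x) x := by
  rcases lt_trichotomy x 0 with hx | hx | hx
  · have hev : Phi =ᶠ[nhds x] (fun _ => (1:ℝ)) := by
      filter_upwards [IsOpen.mem_nhds isOpen_Iio hx] with y hy
      simp [Phi, not_lt.2 (le_of_lt (Set.mem_Iio.mp hy))]
    have h := (hasDerivAt_const x (1:ℝ)).congr_of_eventuallyEq hev
    have hx' : Phi' x = 0 := by simp [Phi', not_lt.2 hx.le]
    rw [hx']; exact h
  · subst hx
    have hx' : Phi' 0 = 0 := by simp [Phi']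
    rw [hx', hasDerivAt_iff_tendsto_slope]
    apply squeeze_zero_norm' (a := fun y : ℝ => |y|)
    · have h1 : ∀ᶠ (y : ℝ) in nhdsWithin 0 {(0:ℝ)}ᶜ, |y| < 1 := by
        apply eventually_nhdsWithin_of_eventually_nhds
        have : Tendsto (fun y : ℝ => |y|) (nhds 0) (nhds |0|) := (continuous_abs.tendsto 0)
        simpa using this.eventually_lt_const (by norm_num : |(0:ℝ)| < 1)
      filter_upwards [h1, self_mem_nhdsWithin] with y hy1 hy2
      have hy0 : y ≠ 0 := hy2
      have hslope : slope Phi 0 y = (Phi y - 1) / y := by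
        simp [slope, Phi, div_eq_inv_mul]
      rw [hslope]
      rcases le_or_gt y 0 with h | h
      · have : Phi y = 1 := by simp [Phi, not_lt.2 h]
        simp [this, abs_nonneg]
      · have hPy : Phi y = Real.exp (y ^ 2 / 8) := by simp [Phi, h]
        have hu : (0:ℝ) ≤ y ^ 2 / 8 := by positivity
        have hub : y ^ 2 / 8 ≤ 1 := by nlinarith [abs_of_pos h ▸ hy1]
        have hexp_le : Real.exp (y ^ 2 / 8) ≤ 3 := by
          calc Real.exp (y ^ 2 / 8) ≤ Real.exp 1 := Real.exp_le_exp.2 hub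
          _ ≤ 3 := by linarith [Real.exp_one_lt_d9]
        have key : Real.exp (y ^ 2 / 8) - 1 ≤ (y ^ 2 / 8) * Real.exp (y ^ 2 / 8) := by
          have h2 := Real.add_one_le_exp (-(y ^ 2 / 8))
          have h3 : Real.exp (y ^ 2 / 8) * Real.exp (-(y ^ 2 / 8)) = 1 := by
            rw [← Real.exp_add]; simp
          nlinarith [Real.exp_pos (y ^ 2 / 8)]
        have hnum : |Phi y - 1| ≤ y * y := by
          rw [hPy, abs_of_nonneg (by linarith [Real.one_le_exp hu])]
          nlinarith
        rw [Real.norm_eq_abs, abs_div]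
        rw [div_le_iff₀ (abs_pos.2 hy0)]
        calc |Phi y - 1| ≤ y * y := hnum
        _ = |y| * |y| := by rw [abs_of_pos h]
    · have : Tendsto (fun y : ℝ => |y|) (nhds 0) (nhds 0) := by
        simpa using (continuous_abs.tendsto (0:ℝ))
      exact this.mono_left nhdsWithin_le_nhds
  · have hev : Phi =ᶠ[nhds x] (fun y => Real.exp (y ^ 2 / 8)) := by
      filter_upwards [IsOpen.mem_nhds isOpen_Ioi hx] with y hy
      simp [Phi, Set.mem_Ioi.mp hy]
    have hd : HasDerivAt (fun y : ℝ => Real.exp (y ^ 2 / 8)) (Real.exp (x ^ 2 / 8) * (2 * x / 8)) x :=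
      (Real.hasDerivAt_exp _).comp x
        (by simpa using ((hasDerivAt_pow 2 x).div_const 8) :
          HasDerivAt (fun y : ℝ => y ^ 2 / 8) (2 * x / 8) x)
    have h := hd.congr_of_eventuallyEq hev
    have hx' : Phi' x = Real.exp (x ^ 2 / 8) * (2 * x / 8) := by
      simp [Phi', hx]; ring
    rw [hx']; exact h

lemma hasDerivAt_phi' {x : ℝ} (hx : 0 < x) :
    HasDerivAt Phi' ((1 / 4 + x ^ 2 / 16) * Real.exp (x ^ 2 / 8)) x := by
  have hev : Phi' =ᶠ[nhds x] (fun y => y / 4 * Real.exp (y ^ 2 / 8)) := by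
    filter_upwards [IsOpen.mem_nhds isOpen_Ioi hx] with y hy
    simp [Phi', Set.mem_Ioi.mp hy]
  have h1 : HasDerivAt (fun y : ℝ => y ^ 2 / 8) (2 * x / 8) x := by
    simpa using ((hasDerivAt_pow 2 x).div_const 8)
  have h2 : HasDerivAt (fun y : ℝ => Real.exp (y ^ 2 / 8)) (Real.exp (x ^ 2 / 8) * (2 * x / 8)) x :=
    (Real.hasDerivAt_exp _).comp x h1
  have h3 : HasDerivAt (fun y : ℝ => y / 4) (1 / 4) x := by
    simpa using (hasDerivAt_id x).div_const 4
  have h4 := h3.mul h2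
  have h5 := h4.congr_of_eventuallyEq hev
  refine h5.congr_deriv ?_
  ring

lemma phi'_lip {s t m : ℝ} (hst : s ≤ t) (htm : t ≤ m) :
    Phi' t - Phi' s ≤ ((1 / 4 + m ^ 2 / 16) * Real.exp (m ^ 2 / 8)) * (t - s) := by
  set C := (1 / 4 + m ^ 2 / 16) * Real.exp (m ^ 2 / 8) with hC
  have hC0 : 0 < C := by positivity
  rcases le_or_gt t 0 with ht | ht
  · have h1 : Phi' t = 0 := by simp [Phi', not_lt.2 ht]
    have h2 : Phi' s = 0 := by simp [Phi', not_lt.2 (hst.trans ht)]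
    rw [h1, h2]
    nlinarith
  · have htm2 : t ^ 2 ≤ m ^ 2 := by nlinarith
    have hexp : Real.exp (t ^ 2 / 8) ≤ Real.exp (m ^ 2 / 8) :=
      Real.exp_le_exp.2 (by linarith)
    rcases le_or_gt s 0 with hs | hs
    · have h2 : Phi' s = 0 := by simp [Phi', not_lt.2 hs]
      have h1 : Phi' t = t / 4 * Real.exp (t ^ 2 / 8) := by simp [Phi', ht]
      rw [h1, h2]
      have key : t / 4 * Real.exp (t ^ 2 / 8) ≤ C * t := by
        rw [hC]
        nlinarith [mul_le_mul_of_nonneg_left hexp ht.le,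
          mul_nonneg (mul_nonneg (sq_nonneg m) (Real.exp_pos (m ^ 2 / 8)).le) ht.le]
      nlinarith
    · have hmono : MonotoneOn (fun y => C * y - Phi' y) (Set.Icc s t) := by
        apply monotoneOn_of_deriv_nonneg (convex_Icc s t)
        · apply ContinuousOn.sub (by fun_prop)
          intro y hy
          exact (hasDerivAt_phi' (lt_of_lt_of_le hs hy.1)).continuousAt.continuousWithinAt
        · intro y hy
          rw [interior_Icc] at hy
          have hy0 : 0 < y := lt_trans hs hy.1
          have hD : HasDerivAt (fun y : ℝ => C * y - Phi' y)
              (C - (1 / 4 + y ^ 2 / 16) * Real.exp (y ^ 2 / 8)) y := by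
            exact (((hasDerivAt_id y).const_mul C).sub (hasDerivAt_phi' hy0)).congr_deriv (by simp)
          exact hD.differentiableAt.differentiableWithinAt
        · intro y hy
          rw [interior_Icc] at hy
          have hy0 : 0 < y := lt_trans hs hy.1
          have hD : HasDerivAt (fun y : ℝ => C * y - Phi' y)
              (C - (1 / 4 + y ^ 2 / 16) * Real.exp (y ^ 2 / 8)) y := by
            exact (((hasDerivAt_id y).const_mul C).sub (hasDerivAt_phi' hy0)).congr_deriv (by simp)
          rw [hD.deriv]
          have hy2 : y ^ 2 ≤ m ^ 2 := by nlinarith [hy.2, htm]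
          have hexp2 : Real.exp (y ^ 2 / 8) ≤ Real.exp (m ^ 2 / 8) :=
            Real.exp_le_exp.2 (by linarith)
          rw [hC]
          nlinarith [Real.exp_pos (y ^ 2 / 8), sq_nonneg y,
            mul_le_mul_of_nonneg_left hexp2 (by positivity : (0:ℝ) ≤ 1 / 4 + y ^ 2 / 16)]
      have h := hmono (Set.left_mem_Icc.2 hst) (Set.right_mem_Icc.2 hst) hst
      simp only at h
      linarith

lemma phi_taylor {x y m : ℝ} (hx : x ≤ m) (hy : y ≤ m) :
    Phi y ≤ Phi x + Phi' x * (y - x)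
      + ((1 / 4 + m ^ 2 / 16) * Real.exp (m ^ 2 / 8)) / 2 * (y - x) ^ 2 := by
  set C := (1 / 4 + m ^ 2 / 16) * Real.exp (m ^ 2 / 8) with hC
  set F := fun t : ℝ => Phi x + (Phi' x * (t - x) + C / 2 * (t - x) ^ 2) - Phi t with hF
  have hFx : F x = 0 := by simp [hF]
  have hFd : ∀ t : ℝ, HasDerivAt F (Phi' x + C * (t - x) - Phi' t) t := by
    intro t
    have ha : HasDerivAt (fun t : ℝ => t - x) 1 t := (hasDerivAt_id t).sub_const x
    have hb : HasDerivAt (fun t : ℝ => Phi' x * (t - x)) (Phi' x) t := by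
      simpa using ha.const_mul (Phi' x)
    have hc : HasDerivAt (fun t : ℝ => (t - x) ^ 2) (2 * (t - x)) t := by
      refine ((hasDerivAt_pow 2 (t - x)).comp t ha).congr_deriv ?_; simp
    have hd : HasDerivAt (fun t : ℝ => C / 2 * (t - x) ^ 2) (C / 2 * (2 * (t - x))) t :=
      hc.const_mul (C / 2)
    have he := ((hb.add hd).const_add (Phi x)).sub (hasDerivAt_phi t)
    have harith : Phi' x + C * (t - x) - Phi' t = Phi' x + C / 2 * (2 * (t - x)) - Phi' t := by
      ring
    rw [harith]
    exact he
  have key : 0 ≤ F y := by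
    rcases le_or_gt x y with hxy | hxy
    · have hmono : MonotoneOn F (Set.Icc x y) := by
        apply monotoneOn_of_deriv_nonneg (convex_Icc x y)
        · exact fun t _ => (hFd t).continuousAt.continuousWithinAt
        · exact fun t _ => (hFd t).differentiableAt.differentiableWithinAt
        · intro t ht
          rw [interior_Icc] at ht
          rw [(hFd t).deriv]
          have h := phi'_lip (le_of_lt ht.1) (le_trans (le_of_lt ht.2) hy)
          rw [← hC] at h
          linarith
      have h := hmono (Set.left_mem_Icc.2 hxy) (Set.right_mem_Icc.2 hxy) hxy
      rw [hFx] at h; exact h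
    · have hanti : AntitoneOn F (Set.Icc y x) := by
        apply antitoneOn_of_deriv_nonpos (convex_Icc y x)
        · exact fun t _ => (hFd t).continuousAt.continuousWithinAt
        · exact fun t _ => (hFd t).differentiableAt.differentiableWithinAt
        · intro t ht
          rw [interior_Icc] at ht
          rw [(hFd t).deriv]
          have h := phi'_lip (le_of_lt ht.2) hx
          rw [← hC] at h
          linarith
      have h := hanti (Set.left_mem_Icc.2 hxy.le) (Set.right_mem_Icc.2 hxy.le) hxy.le
      rw [hFx] at h; exact h
  simp only [hF] at key
  linarith

set_option maxHeartbeats 1000000 in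
lemma core_ineq (a s R d : ℝ) (hR : 0 < R) (ha : 0 < a) (hs2 : s ^ 2 = a) (hs0 : 0 < s)
    (ha640 : a ≤ 1 / 640) (haR2 : a * R ^ 2 ≤ 1 / 100) (hd : |d| ≤ a * R + 2 * s) :
    ((1 / 4 + (R + 21 / 10 * s) ^ 2 / 16) * Real.exp ((R + 21 / 10 * s) ^ 2 / 8)) / 2 * d ^ 2
      - a * R * (R / 4 * Real.exp (R ^ 2 / 8)) ≤ 33 / 50 * a := by
  set m := R + 21 / 10 * s with hm
  set E := Real.exp (R ^ 2 / 8) with hE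
  have hE1 : 1 ≤ E := Real.one_le_exp (by positivity)
  have hE0 : 0 < E := Real.exp_pos _
  have hsR : s * R ≤ 1 / 10 := by
    apply sqrt_helper (by positivity) (by norm_num)
    nlinarith
  have haR : a * R ≤ s / 10 := by
    apply sqrt_helper (by positivity) (by positivity)
    nlinarith [sq_nonneg R, ha.le]
  have hd2 : d ^ 2 ≤ 441 / 100 * a := by
    have h1 : |d| ≤ 21 / 10 * s := by linarith
    have h2 : d ^ 2 = |d| ^ 2 := (sq_abs d).symm
    nlinarith [abs_nonneg d]
  have hm2 : m ^ 2 ≤ R ^ 2 + 43 / 100 := by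
    rw [hm]
    nlinarith [hsR, hs2, ha640]
  have hexp43 : Real.exp ((43 : ℝ) / 800) ≤ 800 / 757 := by
    have h1 := Real.add_one_le_exp (-(43 / 800 : ℝ))
    have h2 : Real.exp ((43 : ℝ) / 800) * Real.exp (-(43 / 800 : ℝ)) = 1 := by
      rw [← Real.exp_add]; norm_num
    nlinarith [Real.exp_pos ((43 : ℝ) / 800),
      mul_le_mul_of_nonneg_left h1 (Real.exp_pos ((43 : ℝ) / 800)).le]
  have hexpm : Real.exp (m ^ 2 / 8) ≤ 800 / 757 * E := by
    calc Real.exp (m ^ 2 / 8) ≤ Real.exp ((R ^ 2 + 43 / 100) / 8) :=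
          Real.exp_le_exp.2 (by linarith)
    _ = E * Real.exp ((43 : ℝ) / 800) := by rw [hE, ← Real.exp_add]; ring_nf
    _ ≤ E * (800 / 757) := mul_le_mul_of_nonneg_left hexp43 hE0.le
    _ = 800 / 757 * E := by ring
  have hq : ((1 / 4 + m ^ 2 / 16) * Real.exp (m ^ 2 / 8)) / 2 * d ^ 2
      ≤ (443 / 1600 + R ^ 2 / 16) * (800 / 757 * E) / 2 * (441 / 100 * a) := by
    have h2 : 1 / 4 + m ^ 2 / 16 ≤ 443 / 1600 + R ^ 2 / 16 := by nlinarith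
    have h3 : (1 / 4 + m ^ 2 / 16) * Real.exp (m ^ 2 / 8)
        ≤ (443 / 1600 + R ^ 2 / 16) * (800 / 757 * E) :=
      mul_le_mul h2 hexpm (Real.exp_pos _).le (by positivity)
    have h4 : (0:ℝ) ≤ ((1 / 4 + m ^ 2 / 16) * Real.exp (m ^ 2 / 8)) / 2 := by positivity
    calc ((1 / 4 + m ^ 2 / 16) * Real.exp (m ^ 2 / 8)) / 2 * d ^ 2
        ≤ ((1 / 4 + m ^ 2 / 16) * Real.exp (m ^ 2 / 8)) / 2 * (441 / 100 * a) :=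
          mul_le_mul_of_nonneg_left hd2 h4
    _ ≤ (443 / 1600 + R ^ 2 / 16) * (800 / 757 * E) / 2 * (441 / 100 * a) :=
          mul_le_mul_of_nonneg_right (by linarith) (by positivity)
  have hEkey : E * (1 - R ^ 2 / 8) ≤ 1 := by
    have h1 := Real.add_one_le_exp (-(R ^ 2 / 8))
    have h2 : E * Real.exp (-(R ^ 2 / 8)) = 1 := by
      rw [hE, ← Real.exp_add]; norm_num
    calc E * (1 - R ^ 2 / 8) = E * (-(R ^ 2 / 8) + 1) := by ring
    _ ≤ E * Real.exp (-(R ^ 2 / 8)) := mul_le_mul_of_nonneg_left h1 hE0.le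
    _ = 1 := h2
  have hfin : E * (781452 / 1211200 - 79 / 757 * R ^ 2) ≤ 33 / 50 := by
    have h2 : (781452 / 1211200 : ℝ) - 79 / 757 * R ^ 2
        ≤ 781452 / 1211200 * (1 - R ^ 2 / 8) := by nlinarith [sq_nonneg R]
    calc E * (781452 / 1211200 - 79 / 757 * R ^ 2)
        ≤ E * (781452 / 1211200 * (1 - R ^ 2 / 8)) :=
          mul_le_mul_of_nonneg_left h2 hE0.le
    _ = 781452 / 1211200 * (E * (1 - R ^ 2 / 8)) := by ring
    _ ≤ 781452 / 1211200 * 1 :=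
      mul_le_mul_of_nonneg_left hEkey (by norm_num)
    _ ≤ 33 / 50 := by norm_num
  have hr : (443 / 1600 + R ^ 2 / 16) * (800 / 757 * E) / 2 * (441 / 100 * a)
      = a * (E * (781452 / 1211200 + 441 / 3028 * R ^ 2)) := by ring
  have hsub : a * R * (R / 4 * E) = a * (E * (R ^ 2 / 4)) := by ring
  have hcomb : a * (E * (781452 / 1211200 + 441 / 3028 * R ^ 2)) - a * (E * (R ^ 2 / 4))
      = a * (E * (781452 / 1211200 - 79 / 757 * R ^ 2)) := by ring
  have hgoal2 : a * (E * (781452 / 1211200 - 79 / 757 * R ^ 2)) ≤ a * (33 / 50) :=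
    mul_le_mul_of_nonneg_left hfin ha.le
  rw [hr] at hq
  linarith

set_option maxHeartbeats 2000000 in
/-- if the set of actions with positive regret is nonempty and the average
potential is below 2.32, then the average potential over that set increases by less than
`(2/3)·α` after one scaled NormalHedge update. -/
theorem normalHedge_positive_regret_average_step

    (N : ℕ) (hN : 1 ≤ N)
    (α : ℝ) (hα0 : 0 < α) (hα : α < 1 / (800 * Real.log (2.32 * N)))
    (R g : Fin N → ℝ) (hg : ∀ i, |g i| ≤ Real.sqrt α)
    (p : Fin N → ℝ)
    (hp : ∀ i, p i =
      if 0 < ∑ k, Phi' (R k) then Phi' (R i) / ∑ k, Phi' (R k) else 1 / N)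
    (gA : ℝ) (hgA : gA = ∑ i, p i * g i)
    (R' : Fin N → ℝ) (hR' : ∀ i, R' i = (1 - α) * R i + g i - gA)
    (I₂ : Finset (Fin N)) (hI₂ : ∀ i, i ∈ I₂ ↔ 0 < R i) (hne : I₂.Nonempty)
    (hΨ : (1 / (N : ℝ)) * ∑ i, Phi (R i) < 2.32) :
    (1 / (I₂.card : ℝ)) * ∑ i ∈ I₂, (Phi (R' i) - Phi (R i)) < (2 / 3) * α := by
  classical
  have hs0 : 0 < Real.sqrt α := Real.sqrt_pos.2 hα0
  have hs2 : Real.sqrt α ^ 2 = α := Real.sq_sqrt hα0.le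
  set s := Real.sqrt α with hsdef
  set L := Real.log (2.32 * N) with hLdef
  have hN0 : (0:ℝ) < N := by exact_mod_cast Nat.lt_of_lt_of_le Nat.zero_lt_one hN
  have hN1 : (1:ℝ) ≤ N := by exact_mod_cast hN
  have h232 : (0:ℝ) < 2.32 * N := by nlinarith
  -- log lower bound
  have hLlb : 4 / 5 < L := by
    have h1 : Real.exp (4 / 5 : ℝ) < 2.32 := by
      have he := Real.exp_one_lt_d9
      have h4 : Real.exp (4:ℝ) = Real.exp 1 ^ (4:ℕ) := by
        rw [← Real.exp_nat_mul]; norm_num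
      have h5 : Real.exp (4 / 5 : ℝ) ^ (5:ℕ) = Real.exp 4 := by
        rw [← Real.exp_nat_mul]; norm_num
      have h6 : Real.exp 1 ^ (4:ℕ) < 2.7182818286 ^ (4:ℕ) :=
        pow_lt_pow_left₀ he (Real.exp_pos 1).le (by norm_num)
      have h7 : Real.exp (4 / 5 : ℝ) ^ (5:ℕ) < (2.32:ℝ) ^ (5:ℕ) := by
        rw [h5, h4]
        calc Real.exp 1 ^ (4:ℕ) < 2.7182818286 ^ (4:ℕ) := h6
        _ < (2.32:ℝ) ^ (5:ℕ) := by norm_num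
      exact lt_of_pow_lt_pow_left₀ 5 (by norm_num) h7
    have h2 : (2.32:ℝ) ≤ 2.32 * N := by nlinarith
    have h3 : (4:ℝ) / 5 < Real.log 2.32 := (Real.lt_log_iff_exp_lt (by norm_num)).2 h1
    have h4 : Real.log 2.32 ≤ L := Real.log_le_log (by norm_num) h2
    linarith
  have hL0 : (0:ℝ) < L := by linarith
  have hαL : α * L < 1 / 800 := by
    rw [lt_div_iff₀ (by positivity : (0:ℝ) < 800 * L)] at hα
    nlinarith
  have hα640 : α ≤ 1 / 640 := by
    nlinarith [mul_lt_mul_of_pos_left hLlb hα0]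
  set S := ∑ k, Phi' (R k) with hSdef
  obtain ⟨i₀, hi₀⟩ := hne
  have hRi₀ : 0 < R i₀ := (hI₂ i₀).1 hi₀
  have hS0 : 0 < S := by
    apply Finset.sum_pos' (fun i _ => phi'_nonneg (R i))
    refine ⟨i₀, Finset.mem_univ i₀, ?_⟩
    simp only [Phi', if_pos hRi₀]
    positivity
  have hpdef : ∀ i, p i = Phi' (R i) / S := fun i => by rw [hp i, if_pos hS0]
  have hSgA : S * gA = ∑ i, Phi' (R i) * g i := by
    rw [hgA, Finset.mul_sum]
    refine Finset.sum_congr rfl fun i _ => ?_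
    rw [hpdef i]
    field_simp
  have hzero : ∑ i, Phi' (R i) * (g i - gA) = 0 := by
    have h1 : ∑ i, Phi' (R i) * (g i - gA)
        = (∑ i, Phi' (R i) * g i) - (∑ i, Phi' (R i)) * gA := by
      rw [Finset.sum_mul, ← Finset.sum_sub_distrib]
      exact Finset.sum_congr rfl fun i _ => by ring
    rw [h1, ← hSdef, ← hSgA]
    ring
  have hzero2 : ∑ i ∈ I₂, Phi' (R i) * (g i - gA) = 0 := by
    rw [Finset.sum_subset (Finset.subset_univ I₂)]
    · exact hzero
    · intro i _ hi
      have hni : ¬ 0 < R i := fun h => hi ((hI₂ i).2 h)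
      simp [Phi', hni]
  have hpsum : ∑ i, p i = 1 := by
    have : ∑ i, p i = (∑ i, Phi' (R i)) / S := by
      rw [Finset.sum_div]
      exact Finset.sum_congr rfl fun i _ => hpdef i
    rw [this, ← hSdef, div_self hS0.ne']
  have hgA_abs : |gA| ≤ s := by
    rw [hgA]
    calc |∑ i, p i * g i| ≤ ∑ i, |p i * g i| := Finset.abs_sum_le_sum_abs _ _
    _ ≤ ∑ i, p i * s := by
        apply Finset.sum_le_sum
        intro i _
        have hpn : 0 ≤ p i := by
          rw [hpdef i]; exact div_nonneg (phi'_nonneg _) hS0.le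
        rw [abs_mul, abs_of_nonneg hpn]
        exact mul_le_mul_of_nonneg_left (hg i) hpn
    _ = s := by rw [← Finset.sum_mul, hpsum, one_mul]
  have hNne : (N:ℝ) ≠ 0 := hN0.ne'
  have hsumPhi : ∑ i, Phi (R i) < 2.32 * N := by
    have h := mul_lt_mul_of_pos_left hΨ hN0
    rw [show (N:ℝ) * (1 / N * ∑ i, Phi (R i)) = ∑ i, Phi (R i) from by field_simp] at h
    linarith
  -- per-term bound
  have hterm : ∀ i ∈ I₂,
      Phi (R' i) - Phi (R i) - Phi' (R i) * (g i - gA) ≤ 33 / 50 * α := by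
    intro i hi
    have hRi : 0 < R i := (hI₂ i).1 hi
    have hPhil : Phi (R i) = Real.exp ((R i) ^ 2 / 8) := by simp [Phi, hRi]
    have hRi2 : (R i) ^ 2 < 8 * L := by
      have h1 : Phi (R i) ≤ ∑ k, Phi (R k) :=
        Finset.single_le_sum (fun k _ => le_trans zero_le_one (phi_ge_one (R k)))
          (Finset.mem_univ i)
      have h2 : Real.exp ((R i) ^ 2 / 8) < 2.32 * N := by
        rw [← hPhil]; linarith
      have h3 : (R i) ^ 2 / 8 < L := (Real.lt_log_iff_exp_lt h232).2 h2
      linarith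
    have haR2 : α * (R i) ^ 2 ≤ 1 / 100 := by nlinarith
    have hΔeq : R' i - R i = -(α * R i) + (g i - gA) := by rw [hR' i]; ring
    have habs : |R' i - R i| ≤ α * R i + 2 * s := by
      rw [hΔeq]
      calc |-(α * R i) + (g i - gA)| ≤ |-(α * R i)| + |g i - gA| := abs_add_le _ _
      _ ≤ α * R i + (|g i| + |gA|) := by
          apply add_le_add
          · rw [abs_neg, abs_of_nonneg (by positivity)]
          · exact abs_sub _ _
      _ ≤ α * R i + 2 * s := by linarith [hgA_abs, hg i]
    have haRle : α * R i ≤ s / 10 := by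
      apply sqrt_helper (by positivity) (by positivity)
      nlinarith [sq_nonneg (R i)]
    have hm1 : R i ≤ R i + 21 / 10 * s := by linarith
    have hm2 : R' i ≤ R i + 21 / 10 * s := by
      have h1 := (abs_le.1 habs).2
      linarith
    have htay := phi_taylor (x := R i) (y := R' i) (m := R i + 21 / 10 * s) hm1 hm2
    have hPhi'i : Phi' (R i) = R i / 4 * Real.exp ((R i) ^ 2 / 8) := by
      simp [Phi', hRi]
    have hcore := core_ineq α s (R i) (R' i - R i) hRi hα0 hs2 hs0 hα640 haR2 habs
    have harr : Phi' (R i) * (R' i - R i) - Phi' (R i) * (g i - gA)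
        = -(α * R i * (R i / 4 * Real.exp ((R i) ^ 2 / 8))) := by
      rw [hΔeq, hPhi'i]; ring
    linarith
  have hsum : ∑ i ∈ I₂, (Phi (R' i) - Phi (R i)) ≤ 33 / 50 * α * I₂.card := by
    have h1 : ∑ i ∈ I₂, (Phi (R' i) - Phi (R i))
        = (∑ i ∈ I₂, (Phi (R' i) - Phi (R i) - Phi' (R i) * (g i - gA)))
          + ∑ i ∈ I₂, Phi' (R i) * (g i - gA) := by
      rw [← Finset.sum_add_distrib]
      exact Finset.sum_congr rfl fun i _ => by ring
    rw [h1, hzero2, add_zero]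
    calc ∑ i ∈ I₂, (Phi (R' i) - Phi (R i) - Phi' (R i) * (g i - gA))
        ≤ ∑ _i ∈ I₂, 33 / 50 * α := Finset.sum_le_sum hterm
    _ = 33 / 50 * α * I₂.card := by
        rw [Finset.sum_const, nsmul_eq_mul]; ring
  have hcard : 0 < (I₂.card : ℝ) := by
    exact_mod_cast Finset.card_pos.2 ⟨i₀, hi₀⟩
  calc (1 / (I₂.card : ℝ)) * ∑ i ∈ I₂, (Phi (R' i) - Phi (R i))
      ≤ (1 / (I₂.card : ℝ)) * (33 / 50 * α * I₂.card) :=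
        mul_le_mul_of_nonneg_left hsum (one_div_nonneg.2 hcard.le)
  _ = 33 / 50 * α := by rw [mul_comm, mul_assoc, mul_one_div_cancel hcard.ne', mul_one]
  _ < 2 / 3 * α := by nlinarith
end
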